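/- Let X be a finite-dimensional real normed space that is smooth, i.e., for every nonzero x ∈ X there exists a unique f ∈ X* with ‖f‖ = 1 and f(x) = ‖x‖. Then every Čebyšev set in X is convex. -/

import Mathlib

open Filter Topology Metric

section ChebyshevAux

variable {X : Type*} [NormedAddCommGroup X] [NormedSpace ℝ X] [FiniteDimensional ℝ X]

/-- If `e` is a unit vector at which the support functional `f` is unique, and `q` satisfies
`μ ≤ ‖μ • e - q‖` for all `μ > 0`, then `f q ≤ 0`. -/
private lemma support_nonpos (e : X) (he : ‖e‖ = 1) (f : X →L[ℝ] ℝ)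
    (hu : ∀ g : X →L[ℝ] ℝ, ‖g‖ = 1 → g e = ‖e‖ → g = f)
    (q : X) (hq : ∀ μ : ℝ, 0 < μ → μ ≤ ‖μ • e - q‖) : f q ≤ 0 := by
  by_cases hq0 : q = 0
  · simp [hq0]
  set z : X := -q with hzdef
  have hz : z ≠ 0 := neg_ne_zero.2 hq0
  -- slope function and its infimum
  set slope : X → ℝ → ℝ := fun v s => (‖e + s • v‖ - 1) / s with hslope
  set S : X → Set ℝ := fun v => slope v '' Set.Ioi (0:ℝ) with hS
  set N : X → ℝ := fun v => sInf (S v) with hN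
  have hSne : ∀ v, (S v).Nonempty := fun v => ⟨slope v 1, ⟨1, by norm_num, rfl⟩⟩
  have hSbdd : ∀ v, ∀ a ∈ S v, -‖v‖ ≤ a := by
    rintro v a ⟨s, hs, rfl⟩
    simp only [Set.mem_Ioi] at hs
    rw [hslope, le_div_iff₀ hs]
    have h1 : ‖e‖ ≤ ‖e + s • v‖ + ‖s • v‖ := by
      calc ‖e‖ = ‖(e + s • v) + (-(s • v))‖ := by congr 1; abel
      _ ≤ ‖e + s • v‖ + ‖-(s • v)‖ := norm_add_le _ _
      _ = ‖e + s • v‖ + ‖s • v‖ := by rw [norm_neg]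
    rw [he] at h1
    rw [norm_smul, Real.norm_eq_abs, abs_of_pos hs] at h1
    nlinarith
  have hSbdd' : ∀ v, BddBelow (S v) := fun v => ⟨-‖v‖, fun a ha => hSbdd v a ha⟩
  have N_le_slope : ∀ v, ∀ s, 0 < s → N v ≤ slope v s := fun v s hs =>
    csInf_le (hSbdd' v) ⟨s, hs, rfl⟩
  have slope_mono : ∀ v, ∀ s t : ℝ, 0 < s → s ≤ t → slope v s ≤ slope v t := by
    intro v s t hs hst
    have ht : (0:ℝ) < t := lt_of_lt_of_le hs hst
    have hkey : ‖e + s • v‖ ≤ (s/t) * ‖e + t • v‖ + (1 - s/t) := by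
      have hrepr : e + s • v = (s/t) • (e + t • v) + (1 - s/t) • e := by
        rw [smul_add, smul_smul]
        rw [div_mul_cancel₀ _ (ne_of_gt ht)]
        rw [sub_smul, one_smul]
        abel
      calc ‖e + s • v‖ = ‖(s/t) • (e + t • v) + (1 - s/t) • e‖ := by rw [hrepr]
      _ ≤ ‖(s/t) • (e + t • v)‖ + ‖(1 - s/t) • e‖ := norm_add_le _ _
      _ = (s/t) * ‖e + t • v‖ + (1 - s/t) := by
          rw [norm_smul, norm_smul, Real.norm_eq_abs, Real.norm_eq_abs, he, mul_one,
            abs_of_pos (div_pos hs ht), abs_of_nonneg (by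
              have : s/t ≤ 1 := (div_le_one ht).2 hst
              linarith)]
    rw [hslope]
    rw [div_le_div_iff₀ hs ht]
    have h2 : t * ‖e + s • v‖ ≤ s * ‖e + t • v‖ + (t - s) := by
      have h3 := mul_le_mul_of_nonneg_left hkey (le_of_lt ht)
      have h4 : t * ((s/t) * ‖e + t • v‖ + (1 - s/t)) = s * ‖e + t • v‖ + (t - s) := by
        field_simp
      linarith
    nlinarith
  have N_zero : N (0:X) = 0 := by
    have h1 : ∀ s : ℝ, 0 < s → slope 0 s = 0 := by
      intro s hs; rw [hslope]; simp [he, ne_of_gt hs]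
    apply le_antisymm
    · have := N_le_slope 0 1 one_pos; rwa [h1 1 one_pos] at this
    · apply le_csInf (hSne 0)
      rintro a ⟨s, hs, rfl⟩; rw [h1 s hs]
  have N_hom : ∀ c : ℝ, 0 < c → ∀ v, N (c • v) = c * N v := by
    intro c hc v
    have key : ∀ s, 0 < s → slope (c • v) s = c * slope v (s * c) := by
      intro s hs
      rw [hslope]
      simp only
      rw [smul_smul]
      generalize ‖e + (s * c) • v‖ = A
      field_simp
    apply le_antisymm
    · have h1 : N (c • v) / c ≤ N v := by
        apply le_csInf (hSne v)
        rintro a ⟨s, hs, rfl⟩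
        simp only [Set.mem_Ioi] at hs
        rw [div_le_iff₀ hc]
        have h2 : N (c • v) ≤ slope (c • v) (s / c) := N_le_slope _ _ (div_pos hs hc)
        rw [key (s/c) (div_pos hs hc), div_mul_cancel₀ _ (ne_of_gt hc)] at h2
        linarith [h2]
      have := (div_le_iff₀ hc).1 h1
      linarith
    · apply le_csInf (hSne (c • v))
      rintro a ⟨s, hs, rfl⟩
      simp only [Set.mem_Ioi] at hs
      rw [key s hs]
      exact mul_le_mul_of_nonneg_left (N_le_slope v (s*c) (mul_pos hs hc)) (le_of_lt hc)
  have N_add : ∀ v w, N (v + w) ≤ N v + N w := by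
    intro v w
    apply le_of_forall_pos_le_add
    intro ε hε
    obtain ⟨a, ⟨s₁, hs₁, rfl⟩, ha⟩ :=
      exists_lt_of_csInf_lt (hSne v) (lt_add_of_pos_right (N v) (half_pos hε))
    obtain ⟨b, ⟨s₂, hs₂, rfl⟩, hb⟩ :=
      exists_lt_of_csInf_lt (hSne w) (lt_add_of_pos_right (N w) (half_pos hε))
    simp only [Set.mem_Ioi] at hs₁ hs₂
    set r : ℝ := min s₁ s₂ / 2 with hrdef
    have hr : 0 < r := by positivity
    have h2r₁ : 2 * r ≤ s₁ := by
      rw [hrdef]; have := min_le_left s₁ s₂; linarith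
    have h2r₂ : 2 * r ≤ s₂ := by
      rw [hrdef]; have := min_le_right s₁ s₂; linarith
    have hsub : slope (v + w) r ≤ slope v (2*r) + slope w (2*r) := by
      have hrepr : e + r • (v + w) = (1/2 : ℝ) • (e + (2*r) • v) + (1/2 : ℝ) • (e + (2*r) • w) := by
        module
      have hnorm : ‖e + r • (v + w)‖ ≤ (1/2) * ‖e + (2*r) • v‖ + (1/2) * ‖e + (2*r) • w‖ := by
        rw [hrepr]
        refine (norm_add_le _ _).trans ?_
        rw [norm_smul, norm_smul]
        norm_num
      rw [hslope]
      simp only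
      rw [div_add_div _ _ (ne_of_gt (by linarith : (0:ℝ) < 2*r)) (ne_of_gt (by linarith : (0:ℝ) < 2*r)), div_le_div_iff₀ hr (by positivity)]
      nlinarith [hnorm, hr, mul_nonneg (mul_nonneg (sub_nonneg.2 hnorm) hr.le) hr.le]
    have hfin : N (v + w) ≤ slope v s₁ + slope w s₂ :=
      (N_le_slope _ r hr).trans (hsub.trans (add_le_add
        (slope_mono v (2*r) s₁ (by linarith) h2r₁)
        (slope_mono w (2*r) s₂ (by linarith) h2r₂)))
    have : slope v s₁ + slope w s₂ ≤ N v + N w + ε := by linarith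
    linarith
  -- the partial linear map on span {z}
  have hdom : ∀ (x : ↥((LinearPMap.mkSpanSingleton (K := ℝ) (σ := RingHom.id ℝ) z (N z) hz).domain)),
      (LinearPMap.mkSpanSingleton (K := ℝ) (σ := RingHom.id ℝ) z (N z) hz) x ≤ N x := by
    rintro ⟨x, hx⟩
    rcases Submodule.mem_span_singleton.1 hx with ⟨c, rfl⟩
    have happ : (LinearPMap.mkSpanSingleton (K := ℝ) (σ := RingHom.id ℝ) z (N z) hz) ⟨c • z, hx⟩ = c • (N z) :=
      LinearPMap.mkSpanSingleton'_apply z (N z) _ c hx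
    rw [happ]
    simp only [smul_eq_mul]
    have h0 : 0 ≤ N z + N (-z) := by
      have h1 := N_add z (-z)
      rw [add_neg_cancel, N_zero] at h1
      linarith
    rcases lt_trichotomy c 0 with hc | hc | hc
    · have heq : c • z = (-c) • (-z) := by rw [neg_smul_neg]
      show c * N z ≤ N (c • z)
      rw [heq, N_hom (-c) (by linarith) (-z)]
      nlinarith
    · subst hc; simp [N_zero]
    · show c * N z ≤ N (c • z)
      rw [N_hom c hc z]
  obtain ⟨g, hg_ext, hg_le⟩ :=
    exists_extension_of_le_sublinear (LinearPMap.mkSpanSingleton (K := ℝ) (σ := RingHom.id ℝ) z (N z) hz) N N_hom N_add hdom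
  have hgz : g z = N z := by
    have h1 := hg_ext ⟨z, Submodule.mem_span_singleton_self z⟩
    rw [LinearPMap.mkSpanSingleton_apply ℝ ℝ hz (N z)] at h1
    exact h1
  have hNle_norm : ∀ v, N v ≤ ‖v‖ := by
    intro v
    refine (N_le_slope v 1 one_pos).trans ?_
    rw [hslope]
    simp only [one_smul, div_one]
    linarith [norm_add_le e v, he.le]
  have habs : ∀ v, |g v| ≤ ‖v‖ := by
    intro v
    rw [abs_le]
    constructor
    · have h1 := (hg_le (-v)).trans (hNle_norm (-v))
      rw [map_neg, norm_neg] at h1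
      linarith
    · exact (hg_le v).trans (hNle_norm v)
  have hNe : N e = 1 := by
    have hse : ∀ s : ℝ, 0 < s → slope e s = 1 := by
      intro s hs
      rw [hslope]
      simp only
      have : e + s • e = (1 + s) • e := by module
      rw [this, norm_smul, Real.norm_eq_abs, he, mul_one, abs_of_pos (by linarith)]
      field_simp
      ring
    apply le_antisymm
    · have := N_le_slope e 1 one_pos; rwa [hse 1 one_pos] at this
    · exact le_csInf (hSne e) (by rintro a ⟨s, hs, rfl⟩; rw [hse s hs])
  have hNnege : N (-e) = -1 := by
    have hse : ∀ s : ℝ, 0 < s → slope (-e) s = (|1 - s| - 1)/s := by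
      intro s hs
      rw [hslope]
      simp only
      have : e + s • (-e) = (1 - s) • e := by module
      rw [this, norm_smul, Real.norm_eq_abs, he, mul_one]
    apply le_antisymm
    · have h1 := N_le_slope (-e) 1 one_pos
      rw [hse 1 one_pos] at h1
      simpa using h1
    · apply le_csInf (hSne (-e))
      rintro a ⟨s, hs, rfl⟩
      simp only [Set.mem_Ioi] at hs
      rw [hse s hs, le_div_iff₀ hs]
      have := le_abs_self (1 - s)
      linarith
  set F := LinearMap.toContinuousLinearMap g with hFdef
  have hFv : ∀ v, F v = g v := fun v => rfl
  have hge1 : g e = 1 := by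
    have h1 : g e ≤ 1 := (hg_le e).trans_eq hNe
    have h2 : g (-e) ≤ -1 := (hg_le (-e)).trans_eq hNnege
    rw [map_neg] at h2
    linarith
  have hF1 : ‖F‖ = 1 := by
    apply le_antisymm
    · apply ContinuousLinearMap.opNorm_le_bound F zero_le_one
      intro v
      rw [one_mul, hFv, Real.norm_eq_abs]
      exact habs v
    · have h1 : ‖F e‖ ≤ ‖F‖ * ‖e‖ := ContinuousLinearMap.le_opNorm F e
      rw [hFv, hge1, he, mul_one] at h1
      simpa using h1
  have hFf : F = f := hu F hF1 (by rw [he, hFv, hge1])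
  have hNz : 0 ≤ N z := by
    apply Real.sInf_nonneg
    rintro a ⟨s, hs, rfl⟩
    simp only [Set.mem_Ioi] at hs
    rw [hslope]
    apply div_nonneg _ (le_of_lt hs)
    have h1 := hq (1/s) (by positivity)
    have hvec : s • ((1/s) • e - q) = e + s • z := by
      rw [hzdef, smul_sub, smul_smul]
      rw [mul_one_div, div_self (ne_of_gt hs), one_smul, smul_neg]
      abel
    have h2 : ‖e + s • z‖ = s * ‖(1/s) • e - q‖ := by
      rw [← hvec, norm_smul, Real.norm_eq_abs, abs_of_pos hs]
    rw [h2]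
    have h3 : s * (1/s) ≤ s * ‖(1/s) • e - q‖ := by
      apply mul_le_mul_of_nonneg_left h1 (le_of_lt hs)
    rw [mul_one_div, div_self (ne_of_gt hs)] at h3
    linarith
  have hgq : g q = - N z := by
    have : g q = - g z := by rw [hzdef, map_neg, neg_neg]
    rw [this, hgz]
  calc f q = F q := by rw [hFf]
  _ = g q := hFv q
  _ = - N z := hgq
  _ ≤ 0 := by linarith

private lemma J_tendsto (J : X → X →L[ℝ] ℝ) (hJb : ∀ x, ‖J x‖ ≤ 1)
    (hJn : ∀ x : X, x ≠ 0 → ‖J x‖ = 1) (hJx : ∀ x : X, x ≠ 0 → J x x = ‖x‖)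
    (hJu : ∀ x : X, x ≠ 0 → ∀ g : X →L[ℝ] ℝ, ‖g‖ = 1 → g x = ‖x‖ → g = J x)
    {z : X} (hz : z ≠ 0) {u : ℕ → X} (hu : Tendsto u atTop (𝓝 z)) :
    Tendsto (fun n => J (u n)) atTop (𝓝 (J z)) := by
  apply tendsto_of_subseq_tendsto
  intro ns hns
  have hns' : Tendsto (fun n => u (ns n)) atTop (𝓝 z) := hu.comp hns
  have hmem : ∀ n, J (u (ns n)) ∈ closedBall (0 : X →L[ℝ] ℝ) 1 := fun n => by
    rw [mem_closedBall, dist_zero_right]; exact hJb _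
  obtain ⟨g, _hgmem, φ, hφ, hconv⟩ :=
    (isCompact_closedBall (0 : X →L[ℝ] ℝ) 1).tendsto_subseq hmem
  have hzn : Tendsto (fun n => u (ns (φ n))) atTop (𝓝 z) := hns'.comp hφ.tendsto_atTop
  have hev : ∀ᶠ n in atTop, u (ns (φ n)) ≠ 0 := hzn.eventually (eventually_ne_nhds hz)
  have happly : Tendsto (fun n => (J (u (ns (φ n)))) (u (ns (φ n)))) atTop (𝓝 (g z)) := by
    have hc : Continuous fun p : (X →L[ℝ] ℝ) × X => p.1 p.2 :=
      isBoundedBilinearMap_apply.continuous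
    exact (hc.tendsto (g, z)).comp (hconv.prodMk_nhds hzn)
  have hnorms : Tendsto (fun n => (J (u (ns (φ n)))) (u (ns (φ n)))) atTop (𝓝 ‖z‖) := by
    apply Tendsto.congr' _ hzn.norm
    filter_upwards [hev] with n hn
    exact (hJx _ hn).symm
  have hgz : g z = ‖z‖ := tendsto_nhds_unique happly hnorms
  have hg1 : ‖g‖ = 1 := by
    have h1 : Tendsto (fun n => ‖J (u (ns (φ n)))‖) atTop (𝓝 ‖g‖) := hconv.norm
    have h2 : Tendsto (fun n => ‖J (u (ns (φ n)))‖) atTop (𝓝 1) := by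
      apply Tendsto.congr' _ tendsto_const_nhds
      filter_upwards [hev] with n hn
      exact (hJn _ hn).symm
    exact tendsto_nhds_unique h1 h2
  have : g = J z := hJu z hz g hg1 hgz
  exact ⟨φ, this ▸ hconv⟩

private lemma P_tendsto (K : Set X) (hKc : IsClosed K) (P : X → X)
    (hPmem : ∀ x, P x ∈ K) (hPdist : ∀ x, ‖x - P x‖ = infDist x K)
    (hPuniq : ∀ x v, v ∈ K → ‖x - v‖ = infDist x K → v = P x)
    {z : X} {u : ℕ → X} (hu : Tendsto u atTop (𝓝 z)) :
    Tendsto (fun n => P (u n)) atTop (𝓝 (P z)) := by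
  apply tendsto_of_subseq_tendsto
  intro ns hns
  have hns' : Tendsto (fun n => u (ns n)) atTop (𝓝 z) := hu.comp hns
  obtain ⟨Nb, hNb⟩ := Metric.tendsto_atTop.1 hns' 1 one_pos
  have hvs : Tendsto (fun k => u (ns (k + Nb))) atTop (𝓝 z) :=
    hns'.comp (tendsto_add_atTop_nat Nb)
  have hmem : ∀ k, P (u (ns (k + Nb))) ∈ closedBall z (infDist z K + 2) := by
    intro k
    set w := u (ns (k + Nb)) with hw
    have hd : dist w z < 1 := hNb _ (Nat.le_add_left Nb k)
    rw [mem_closedBall]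
    have h1 : dist (P w) z ≤ dist (P w) w + dist w z := dist_triangle _ _ _
    have h2 : dist (P w) w = infDist w K := by
      rw [dist_comm, dist_eq_norm, hPdist]
    have h3 : infDist w K ≤ infDist z K + dist w z := infDist_le_infDist_add_dist
    linarith
  obtain ⟨v, _hvmem, φ, hφ, hconv⟩ := (isCompact_closedBall z _).tendsto_subseq hmem
  have hseq : Tendsto (fun k => u (ns (φ k + Nb))) atTop (𝓝 z) := hvs.comp hφ.tendsto_atTop
  have hvK : v ∈ K := hKc.mem_of_tendsto hconv (Eventually.of_forall fun k => hPmem _)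
  have hdist : ‖z - v‖ = infDist z K := by
    have h1 : Tendsto (fun k => ‖u (ns (φ k + Nb)) - P (u (ns (φ k + Nb)))‖) atTop
        (𝓝 ‖z - v‖) := (hseq.sub hconv).norm
    have h3 : Tendsto (fun k => ‖u (ns (φ k + Nb)) - P (u (ns (φ k + Nb)))‖) atTop
        (𝓝 (infDist z K)) := by
      have h4 : Tendsto (fun k => infDist (u (ns (φ k + Nb))) K) atTop (𝓝 (infDist z K)) :=
        ((continuous_infDist_pt K).tendsto z).comp hseq
      exact h4.congr fun k => (hPdist _).symm
    exact tendsto_nhds_unique h1 h3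
  have hvP : v = P z := hPuniq z v hvK hdist
  exact ⟨fun k => φ k + Nb, hvP ▸ hconv⟩

set_option maxHeartbeats 1600000 in
private lemma cheb_extend (K : Set X) (P : X → X)
    (hPmem : ∀ x, P x ∈ K) (hPdist : ∀ x, ‖x - P x‖ = infDist x K)
    (hPcont : Continuous P)
    (J : X → X →L[ℝ] ℝ) (hJb : ∀ x, ‖J x‖ ≤ 1)
    (hJn : ∀ x : X, x ≠ 0 → ‖J x‖ = 1) (hJx : ∀ x : X, x ≠ 0 → J x x = ‖x‖)
    (hJcont : ∀ z : X, z ≠ 0 → ContinuousAt J z)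
    (y : X) (hy : 0 < infDist y K) :
    ∃ z : X, ‖z - y‖ ≤ 1 ∧ infDist z K = infDist y K + 1 := by
  set d : X → ℝ := fun x => infDist x K with hd
  have hdcont : Continuous d := continuous_infDist_pt K
  set d0 : ℝ := d y with hd0def
  have hd0 : 0 < d0 := hy
  have hdlip : ∀ a b : X, d a ≤ d b + ‖a - b‖ := by
    intro a b
    have := infDist_le_infDist_add_dist (x := a) (y := b) (s := K)
    rwa [dist_eq_norm] at this
  have hdle : ∀ x : X, ∀ v ∈ K, d x ≤ ‖x - v‖ := by
    intro x v hv
    have := infDist_le_dist_of_mem (x := x) hv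
    rwa [dist_eq_norm] at this
  -- compact sets
  set C : Set X := closedBall y 2 ∩ {a | d0/2 ≤ d a} with hCdef
  have hCc : IsCompact C := (isCompact_closedBall y 2).inter_right
    (isClosed_le continuous_const hdcont)
  set D : Set X := {a : X | d0/2 ≤ ‖a‖ ∧ ‖a‖ ≤ d0 + 3} with hDdef
  have hDc : IsCompact D := by
    apply isCompact_of_isClosed_isBounded
    · exact (isClosed_le continuous_const continuous_norm).inter
        (isClosed_le continuous_norm continuous_const)
    · apply Bornology.IsBounded.subset (isBounded_closedBall (x := (0:X)) (r := d0 + 3))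
      intro a ha
      rw [mem_closedBall, dist_zero_right]
      exact ha.2
  have hJD : UniformContinuousOn J D :=
    hDc.uniformContinuousOn_of_continuous (fun a ha => by
      have ha' : a ≠ 0 := by
        intro h0
        have h1 := ha.1
        rw [h0, norm_zero] at h1
        linarith
      exact (hJcont a ha').continuousWithinAt)
  have hPD : UniformContinuousOn P C :=
    hCc.uniformContinuousOn_of_continuous hPcont.continuousOn
  -- the max point on the unit ball around y
  obtain ⟨zstar, hzsmem, hzsmax⟩ := (isCompact_closedBall y 1).exists_isMaxOn
    ⟨y, mem_closedBall_self zero_le_one⟩ hdcont.continuousOn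
  -- key claim
  have hkey : ∀ ε : ℝ, 0 < ε → ε ≤ 1/4 → d0 + (1 - 2*ε) ≤ d zstar := by
    intro ε hε hε4
    obtain ⟨η, hη, hJmod⟩ := Metric.uniformContinuousOn_iff.1 hJD ε hε
    obtain ⟨δP, hδP, hPmod⟩ := Metric.uniformContinuousOn_iff.1 hPD η hη
    set δ : ℝ := min (δP/2) (min (d0/8) 1) with hδdef
    have hδ : 0 < δ := by
      apply lt_min (by linarith)
      exact lt_min (by linarith) one_pos
    have hδP' : δ < δP := by
      have := min_le_left (δP/2) (min (d0/8) 1)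
      linarith
    have hδd0 : δ ≤ d0/8 := le_trans (min_le_right _ _) (min_le_left _ _)
    have hδ1 : δ ≤ 1 := le_trans (min_le_right _ _) (min_le_right _ _)
    -- single step estimate
    have hstep : ∀ z : X, ‖z - y‖ ≤ 1 → d0 ≤ d z → ∀ h : ℝ, 0 < h → h ≤ δ →
        ∀ w : X, ‖w‖ ≤ 1 → d z + h * (J (z - P z) w - ε) ≤ d (z + h • w) := by
      intro z hzy hzd h hh hhδ w hw
      have hdzub : d z ≤ d0 + 1 := by
        have := hdlip z y
        linarith
      set z' := z + h • w with hz'def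
      have hzz' : ‖z' - z‖ ≤ h := by
        rw [hz'def]
        simp only [add_sub_cancel_left]
        rw [norm_smul, Real.norm_eq_abs, abs_of_pos hh]
        nlinarith
      set v' := P z' with hv'def
      have hv'K : v' ∈ K := hPmem z'
      have hdz'lb : d z - h ≤ d z' := by
        have := hdlip z z'
        have h2 : ‖z - z'‖ = ‖z' - z‖ := norm_sub_rev _ _
        linarith
      have hdz'ub : d z' ≤ d z + h := by
        have := hdlip z' z
        linarith
      have hzC : z ∈ C := by
        constructor
        · rw [mem_closedBall, dist_eq_norm]
          linarith
        · show d0/2 ≤ d z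
          linarith
      have hz'C : z' ∈ C := by
        constructor
        · rw [mem_closedBall, dist_eq_norm]
          have : ‖z' - y‖ ≤ ‖z' - z‖ + ‖z - y‖ := norm_sub_le_norm_sub_add_norm_sub _ _ _
          linarith
        · show d0/2 ≤ d z'
          linarith
      have hPlt : dist (P z') (P z) < η := by
        apply hPmod z' hz'C z hzC
        rw [dist_eq_norm]
        linarith
      set chord := z - v' with hchorddef
      set base := z - P z with hbasedef
      have hbasenorm : ‖base‖ = d z := hPdist z
      have hbaseD : base ∈ D := by
        constructor <;> rw [hbasenorm]
        · linarith
        · linarith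
      have hchordlb : d z - 2*h ≤ ‖chord‖ := by
        have h1 : ‖z' - v'‖ = d z' := hPdist z'
        have h2 : ‖z' - v'‖ ≤ ‖z' - z‖ + ‖z - v'‖ := norm_sub_le_norm_sub_add_norm_sub _ _ _
        rw [h1] at h2
        linarith
      have hchordub : ‖chord‖ ≤ d z + 2*h := by
        have h1 : ‖z' - v'‖ = d z' := hPdist z'
        have h2 : ‖z - v'‖ ≤ ‖z - z'‖ + ‖z' - v'‖ := norm_sub_le_norm_sub_add_norm_sub _ _ _
        rw [h1] at h2
        have h3 : ‖z - z'‖ = ‖z' - z‖ := norm_sub_rev _ _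
        linarith
      have hchordD : chord ∈ D := by
        constructor
        · linarith
        · linarith
      have hchordne : chord ≠ 0 := by
        intro h0
        rw [h0, norm_zero] at hchordlb
        linarith
      have hJlt : ‖J chord - J base‖ < ε := by
        have := hJmod chord hchordD base hbaseD (by
          rw [dist_eq_norm]
          have : chord - base = P z - v' := by
            rw [hchorddef, hbasedef]
            abel
          rw [this, ← dist_eq_norm, dist_comm]
          exact hPlt)
        rwa [dist_eq_norm] at this
      have hJwcomp : J base w - ε ≤ J chord w := by
        have h1 : (J base - J chord) w ≤ ‖J base - J chord‖ * ‖w‖ :=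
          le_trans (le_abs_self _) ((J base - J chord).le_opNorm w)
        have h2 : ‖J base - J chord‖ = ‖J chord - J base‖ := norm_sub_rev _ _
        have h3 : ‖J base - J chord‖ * ‖w‖ ≤ ε := by
          rw [h2]
          calc ‖J chord - J base‖ * ‖w‖ ≤ ε * 1 := by
                apply mul_le_mul hJlt.le hw (norm_nonneg _) hε.le
          _ = ε := mul_one ε
        have h4 : (J base - J chord) w = J base w - J chord w := rfl
        linarith [h1.trans h3, h4 ▸ (h1.trans h3)]
      have hfinal : J chord (z' - v') ≤ d z' := by
        have h1 : J chord (z' - v') ≤ ‖J chord‖ * ‖z' - v'‖ :=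
          le_trans (le_abs_self _) ((J chord).le_opNorm _)
        have h2 : ‖z' - v'‖ = d z' := hPdist z'
        have h3 : ‖J chord‖ * ‖z' - v'‖ ≤ 1 * ‖z' - v'‖ :=
          mul_le_mul_of_nonneg_right (hJb chord) (norm_nonneg _)
        rw [h2] at h1 h3
        linarith
      have hexpand : J chord (z' - v') = ‖chord‖ + h * J chord w := by
        have h1 : z' - v' = chord + h • w := by
          rw [hchorddef, hz'def]
          abel
        rw [h1, map_add, map_smul, smul_eq_mul, hJx chord hchordne]
      have hlast : d z ≤ ‖chord‖ := hdle z v' hv'K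
      nlinarith [hJwcomp, hfinal, hexpand, hlast, hh.le]
    -- direction selection
    have hdir : ∀ z : X, 0 < d z → ∃ w : X, ‖w‖ ≤ 1 ∧ 1 - ε ≤ J (z - P z) w := by
      intro z hdz
      have hbne : z - P z ≠ 0 := by
        intro h0
        have := hPdist z
        rw [h0, norm_zero] at this
        linarith
      by_contra hcon
      push_neg at hcon
      have hb : ∀ w : X, |J (z - P z) w| ≤ (1 - ε) * ‖w‖ := by
        intro w
        rcases eq_or_ne w 0 with h0 | h0
        · simp [h0]
        · have hwn : 0 < ‖w‖ := norm_pos_iff.2 h0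
          have h1 := hcon (‖w‖⁻¹ • w) (by
            rw [norm_smul, Real.norm_eq_abs, abs_of_pos (inv_pos.2 hwn), inv_mul_cancel₀ (ne_of_gt hwn)])
          have h2 := hcon (-(‖w‖⁻¹ • w)) (by
            rw [norm_neg, norm_smul, Real.norm_eq_abs, abs_of_pos (inv_pos.2 hwn), inv_mul_cancel₀ (ne_of_gt hwn)])
          rw [map_neg] at h2
          rw [map_smul, smul_eq_mul] at h1 h2
          have hc : ‖w‖ * (‖w‖⁻¹ * (J (z - P z)) w) = (J (z - P z)) w := by
            field_simp
          have hu1 : ‖w‖ * (‖w‖⁻¹ * (J (z - P z)) w) < ‖w‖ * (1 - ε) :=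
            mul_lt_mul_of_pos_left h1 hwn
          have hu2 : ‖w‖ * (-(‖w‖⁻¹ * (J (z - P z)) w)) < ‖w‖ * (1 - ε) :=
            mul_lt_mul_of_pos_left h2 hwn
          rw [hc] at hu1
          rw [mul_neg, hc] at hu2
          rw [abs_le]
          constructor
          · nlinarith [hu2]
          · nlinarith [hu1]
      have : ‖J (z - P z)‖ ≤ 1 - ε :=
        (J (z - P z)).opNorm_le_bound (by linarith) hb
      rw [hJn _ hbne] at this
      linarith
    -- choice of direction function
    have hwsel : ∀ z : X, ∃ w : X, ‖w‖ ≤ 1 ∧ (0 < d z → 1 - ε ≤ J (z - P z) w) := by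
      intro z
      by_cases hdz : 0 < d z
      · obtain ⟨w, hw1, hw2⟩ := hdir z hdz
        exact ⟨w, hw1, fun _ => hw2⟩
      · exact ⟨0, by simp, fun h => absurd h hdz⟩
    choose wsel hwnorm hwval using hwsel
    -- number of steps
    obtain ⟨n, hn⟩ := exists_nat_one_div_lt hδ
    set m : ℕ := n + 1 with hmdef
    have hm : 0 < (m:ℝ) := by positivity
    have hmδ : 1/(m:ℝ) ≤ δ := by
      rw [hmdef]
      push_cast
      exact hn.le
    set step : X → X := fun z => z + (1/(m:ℝ)) • wsel z with hstepdef
    set zs : ℕ → X := fun k => step^[k] y with hzsdef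
    have hzs0 : zs 0 = y := rfl
    have hzssucc : ∀ k, zs (k+1) = zs k + (1/(m:ℝ)) • wsel (zs k) := by
      intro k
      rw [hzsdef]
      simp only
      rw [Function.iterate_succ_apply']
    have hinv : ∀ k : ℕ, k ≤ m → ‖zs k - y‖ ≤ (k:ℝ)/m ∧ d0 + ((k:ℝ)/m)*(1 - 2*ε) ≤ d (zs k) := by
      intro k
      induction k with
      | zero => intro _; constructor <;> simp [hzs0] <;> exact le_rfl
      | succ k ih =>
        intro hk1
        obtain ⟨ih1, ih2⟩ := ih (by omega)
        have hkm : (k:ℝ) ≤ (m:ℝ) - 1 := by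
          have : (k:ℝ) + 1 ≤ (m:ℝ) := by exact_mod_cast hk1
          linarith
        have hky : ‖zs k - y‖ ≤ 1 := by
          have : (k:ℝ)/m ≤ 1 := by
            rw [div_le_one hm]
            linarith
          linarith
        have hkd : d0 ≤ d (zs k) := by
          have h1 : 0 ≤ ((k:ℝ)/m)*(1 - 2*ε) := by
            apply mul_nonneg (by positivity)
            linarith
          linarith
        have hdpos : 0 < d (zs k) := lt_of_lt_of_le hd0 hkd
        have hstepk := hstep (zs k) hky hkd (1/(m:ℝ)) (by positivity) hmδ
          (wsel (zs k)) (hwnorm (zs k))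
        have hJval := hwval (zs k) hdpos
        rw [← hzssucc k] at hstepk
        constructor
        · have h1 : ‖zs (k+1) - y‖ ≤ ‖zs (k+1) - zs k‖ + ‖zs k - y‖ :=
            norm_sub_le_norm_sub_add_norm_sub _ _ _
          have h2 : ‖zs (k+1) - zs k‖ ≤ 1/(m:ℝ) := by
            rw [hzssucc k]
            simp only [add_sub_cancel_left]
            rw [norm_smul, Real.norm_eq_abs, abs_of_pos (by positivity : (0:ℝ) < 1/(m:ℝ))]
            exact mul_le_of_le_one_right (by positivity) (hwnorm _)
          have h3 : (((k+1 : ℕ)):ℝ)/m = (k:ℝ)/m + 1/m := by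
            push_cast [hmdef]
            ring
          rw [h3]
          linarith
        · have h4 : d (zs k) + (1/(m:ℝ)) * ((1 - ε) - ε) ≤ d (zs (k+1)) := by
            have h5 : (1/(m:ℝ)) * (J (zs k - P (zs k)) (wsel (zs k)) - ε) ≥
                (1/(m:ℝ)) * ((1 - ε) - ε) := by
              apply mul_le_mul_of_nonneg_left _ (by positivity)
              linarith
            linarith [hstepk]
          have h6 : (((k+1:ℕ)):ℝ)/m * (1 - 2*ε) = ((k:ℝ)/m)*(1 - 2*ε) + (1/m)*(1 - 2*ε) := by
            push_cast [hmdef]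
            ring
          rw [h6]
          have : (1/(m:ℝ)) * ((1 - ε) - ε) = (1/(m:ℝ))*(1 - 2*ε) := by ring
          linarith [this ▸ h4]
    obtain ⟨hfin1, hfin2⟩ := hinv m le_rfl
    have hmm : (m:ℝ)/m = 1 := div_self (ne_of_gt hm)
    rw [hmm] at hfin1 hfin2
    have hzsm : zs m ∈ closedBall y 1 := by
      rw [mem_closedBall, dist_eq_norm]
      linarith
    have hthis : d (zs m) ≤ d zstar := hzsmax hzsm
    linarith [hfin2, hthis]
  -- conclude
  have hup : d zstar ≤ d0 + 1 := by
    have h1 := hdlip zstar y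
    rw [mem_closedBall, dist_eq_norm] at hzsmem
    linarith
  have hlow : d0 + 1 ≤ d zstar := by
    by_contra hcon
    push_neg at hcon
    set ε : ℝ := min ((d0 + 1 - d zstar)/4) (1/4) with hεdef
    have hε : 0 < ε := lt_min (by linarith) (by norm_num)
    have h1 := hkey ε hε (min_le_right _ _)
    have h2 : ε ≤ (d0 + 1 - d zstar)/4 := min_le_left _ _
    linarith
  refine ⟨zstar, ?_, le_antisymm hup hlow⟩
  rw [mem_closedBall, dist_eq_norm] at hzsmem
  exact hzsmem

set_option maxHeartbeats 1600000 in
private lemma cheb_halfspace (K : Set X) (P : X → X)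
    (hPmem : ∀ x, P x ∈ K) (hPdist : ∀ x, ‖x - P x‖ = infDist x K)
    (hPcont : Continuous P)
    (J : X → X →L[ℝ] ℝ) (hJb : ∀ x, ‖J x‖ ≤ 1)
    (hJn : ∀ x : X, x ≠ 0 → ‖J x‖ = 1) (hJx : ∀ x : X, x ≠ 0 → J x x = ‖x‖)
    (hJu : ∀ x : X, x ≠ 0 → ∀ g : X →L[ℝ] ℝ, ‖g‖ = 1 → g x = ‖x‖ → g = J x)
    (x : X) (hx : 0 < infDist x K) :
    ∃ f : X →L[ℝ] ℝ, (∀ w ∈ K, f w ≤ f (P x)) ∧ f (P x) + infDist x K ≤ f x := by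
  set d : X → ℝ := fun z => infDist z K with hd
  have hdle : ∀ z : X, ∀ v ∈ K, d z ≤ ‖z - v‖ := by
    intro z v hv
    have := infDist_le_dist_of_mem (x := z) hv
    rwa [dist_eq_norm] at this
  have hJcont : ∀ z : X, z ≠ 0 → ContinuousAt J z := by
    intro z hz
    apply tendsto_iff_seq_tendsto.2
    intro u hu
    exact J_tendsto J hJb hJn hJx hJu hz hu
  -- iterated extensions
  have hext : ∀ y : X, ∃ z : X, 0 < d y → (‖z - y‖ ≤ 1 ∧ d z = d y + 1) := by
    intro y
    by_cases hy : 0 < d y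
    · obtain ⟨z, h1, h2⟩ := cheb_extend K P hPmem hPdist hPcont J hJb hJn hJx hJcont y hy
      exact ⟨z, fun _ => ⟨h1, h2⟩⟩
    · exact ⟨y, fun h => absurd h hy⟩
  choose next hnext using hext
  set ys : ℕ → X := fun k => next^[k] x with hysdef
  have hys0 : ys 0 = x := rfl
  have hyssucc : ∀ k, ys (k+1) = next (ys k) := by
    intro k
    rw [hysdef]
    simp only
    rw [Function.iterate_succ_apply']
  have hinv : ∀ k : ℕ, d (ys k) = d x + k ∧ ‖ys k - x‖ ≤ k := by
    intro k
    induction k with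
    | zero => simp [hys0]
    | succ k ih =>
      obtain ⟨ih1, ih2⟩ := ih
      have hpos : 0 < d (ys k) := by
        have : (0:ℝ) ≤ k := Nat.cast_nonneg k
        linarith
      obtain ⟨h1, h2⟩ := hnext (ys k) hpos
      rw [← hyssucc k] at h1 h2
      constructor
      · rw [h2, ih1]
        push_cast
        ring
      · have h3 : ‖ys (k+1) - x‖ ≤ ‖ys (k+1) - ys k‖ + ‖ys k - x‖ :=
          norm_sub_le_norm_sub_add_norm_sub _ _ _
        push_cast
        linarith
  set p := P x with hp
  set μ : ℕ → ℝ := fun k => d x + k with hμ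
  have hμpos : ∀ k, 0 < μ k := fun k => by
    have : (0:ℝ) ≤ k := Nat.cast_nonneg k
    rw [hμ]; simp only; linarith
  have hμk : ∀ k : ℕ, (k:ℝ) ≤ μ k := fun k => by rw [hμ]; simp only; linarith
  have hnormyp : ∀ k, ‖ys k - p‖ = μ k := by
    intro k
    obtain ⟨h1, h2⟩ := hinv k
    apply le_antisymm
    · have h3 : ‖ys k - p‖ ≤ ‖ys k - x‖ + ‖x - p‖ := norm_sub_le_norm_sub_add_norm_sub _ _ _
      have h4 : ‖x - p‖ = d x := hPdist x
      rw [hμ]; simp only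
      linarith
    · have h5 := hdle (ys k) p (hPmem x)
      rw [h1] at h5
      exact h5
  set e : ℕ → X := fun k => (μ k)⁻¹ • (ys k - p) with he
  have hemem : ∀ k, e k ∈ sphere (0:X) 1 := by
    intro k
    rw [mem_sphere, dist_zero_right, he]
    simp only
    rw [norm_smul, Real.norm_eq_abs, abs_of_pos (inv_pos.2 (hμpos k)), hnormyp k]
    field_simp
    exact div_self (hμpos k).ne'
  have hsmul : ∀ k, μ k • e k = ys k - p := by
    intro k
    rw [he]
    simp only
    rw [smul_smul, mul_inv_cancel₀ (ne_of_gt (hμpos k)), one_smul]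
  obtain ⟨E, hEmem, φ, hφ, hconv⟩ := (isCompact_sphere (0:X) 1).tendsto_subseq hemem
  have hE1 : ‖E‖ = 1 := by
    rw [mem_sphere, dist_zero_right] at hEmem
    exact hEmem
  have hEne : E ≠ 0 := by
    intro h0
    rw [h0, norm_zero] at hE1
    norm_num at hE1
  refine ⟨J E, ?_, ?_⟩
  · -- half-space property
    intro w hw
    have key : J E (w - p) ≤ 0 := by
      apply support_nonpos E hE1 (J E) (hJu E hEne) (w - p)
      intro ν hν
      -- per-k inequality
      have hperk : ∀ k, ν ≤ μ k → ν ≤ ‖ν • e k - (w - p)‖ := by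
        intro k hνμ
        have h1 : μ k • e k - (w - p) = ys k - w := by
          rw [hsmul k]; abel
        have h2 : μ k ≤ ‖ys k - w‖ := by
          have := hdle (ys k) w hw
          rw [(hinv k).1] at this
          rw [hμ]; simp only
          exact this
        have h3 : ‖μ k • e k - (w - p)‖ ≤ ‖ν • e k - (w - p)‖ + (μ k - ν) := by
          have hrepr : μ k • e k - (w - p) = (ν • e k - (w - p)) + (μ k - ν) • e k := by
            rw [sub_smul]; abel
          rw [hrepr]
          refine (norm_add_le _ _).trans ?_
          have h4 : ‖(μ k - ν) • e k‖ = μ k - ν := by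
            rw [norm_smul, Real.norm_eq_abs, abs_of_nonneg (by linarith)]
            have h5 := hemem k
            rw [mem_sphere, dist_zero_right] at h5
            rw [h5, mul_one]
          linarith
        rw [h1] at h3
        linarith
      -- limit
      have hlim : Tendsto (fun j => ‖ν • e (φ j) - (w - p)‖) atTop (𝓝 ‖ν • E - (w - p)‖) := by
        exact (((hconv.const_smul ν).sub tendsto_const_nhds).norm)
      apply ge_of_tendsto hlim
      filter_upwards [eventually_ge_atTop ⌈ν⌉₊] with j hj
      apply hperk
      calc ν ≤ (⌈ν⌉₊ : ℝ) := Nat.le_ceil ν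
      _ ≤ (j : ℝ) := by exact_mod_cast hj
      _ ≤ (φ j : ℝ) := by exact_mod_cast hφ.le_apply
      _ ≤ μ (φ j) := hμk (φ j)
    have := key
    rw [map_sub] at this
    linarith
  · -- excludes x
    have key : d x ≤ J E (x - p) := by
      have hperk : ∀ k, d x ≤ J (e k) (x - p) := by
        intro k
        have hekne : e k ≠ 0 := by
          intro h0
          have h5 := hemem k
          rw [mem_sphere, dist_zero_right, h0, norm_zero] at h5
          norm_num at h5
        have h1 : J (e k) (ys k - p) = μ k := by
          rw [← hsmul k, map_smul, smul_eq_mul, hJx (e k) hekne]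
          have h5 := hemem k
          rw [mem_sphere, dist_zero_right] at h5
          rw [h5, mul_one]
        have h2 : J (e k) (ys k - x) ≤ (k:ℝ) := by
          calc J (e k) (ys k - x) ≤ |J (e k) (ys k - x)| := le_abs_self _
          _ ≤ ‖J (e k)‖ * ‖ys k - x‖ := (J (e k)).le_opNorm _
          _ ≤ 1 * (k:ℝ) := by
              apply mul_le_mul (hJb _) (hinv k).2 (norm_nonneg _) zero_le_one
          _ = (k:ℝ) := one_mul _
        have h3 : x - p = (ys k - p) - (ys k - x) := by abel
        rw [h3, map_sub, h1]
        rw [hμ]; simp only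
        linarith
      have hlim : Tendsto (fun j => J (e (φ j)) (x - p)) atTop (𝓝 (J E (x - p))) := by
        have hJt : Tendsto (fun j => J (e (φ j))) atTop (𝓝 (J E)) := by
          apply J_tendsto J hJb hJn hJx hJu hEne
          exact hconv
        exact ((ContinuousLinearMap.apply ℝ ℝ (x - p)).continuous.tendsto (J E)).comp hJt
      exact ge_of_tendsto hlim (Eventually.of_forall (fun j => hperk (φ j)))
    rw [map_sub] at key
    linarith

end ChebyshevAux

open Filter Topology

set_option maxHeartbeats 1600000 in
/-- In a finite-dimensional smooth real normed space (for every nonzero `x` there is a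
unique norm-one continuous linear functional `f` with `f x = ‖x‖`), every Čebyšev set is
convex. -/
theorem chebyshev_convex_of_finiteDimensional_smooth {X : Type*} [NormedAddCommGroup X]
    [NormedSpace ℝ X] [FiniteDimensional ℝ X]
    (hsmooth : ∀ x : X, x ≠ 0 → ∃! f : X →L[ℝ] ℝ, ‖f‖ = 1 ∧ f x = ‖x‖)
    (K : Set X)
    (hcheb : ∀ x : X, ∃! v : X, v ∈ K ∧ ‖x - v‖ = Metric.infDist x K) :
    Convex ℝ K := by
  -- the projection
  choose P hP1 hP2 using hcheb
  have hPmem : ∀ x, P x ∈ K := fun x => (hP1 x).1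
  have hPdist : ∀ x, ‖x - P x‖ = infDist x K := fun x => (hP1 x).2
  have hPuniq : ∀ x v, v ∈ K → ‖x - v‖ = infDist x K → v = P x :=
    fun x v h1 h2 => hP2 x v ⟨h1, h2⟩
  -- K is nonempty and closed
  have hKne : K.Nonempty := ⟨P 0, hPmem 0⟩
  have hKc : IsClosed K := by
    have hsub : closure K ⊆ K := by
      intro x hx
      have h0 : infDist x K = 0 := infDist_zero_of_mem_closure hx
      have h1 : ‖x - P x‖ = 0 := by rw [hPdist x, h0]
      have h2 : x = P x := by
        rwa [norm_sub_eq_zero_iff] at h1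
      rw [h2]
      exact hPmem x
    exact isClosed_of_closure_subset hsub
  -- positivity of distance off K
  have hdpos : ∀ x, x ∉ K → 0 < infDist x K := by
    intro x hx
    rcases lt_or_eq_of_le (infDist_nonneg (s := K) (x := x)) with h | h
    · exact h
    · exfalso
      apply hx
      have : x ∈ closure K := (mem_closure_iff_infDist_zero hKne).2 h.symm
      rwa [hKc.closure_eq] at this
  -- the duality map
  have hJex : ∀ x : X, ∃ f : X →L[ℝ] ℝ,
      (x ≠ 0 → ‖f‖ = 1 ∧ f x = ‖x‖ ∧ ∀ g : X →L[ℝ] ℝ, ‖g‖ = 1 → g x = ‖x‖ → g = f) ∧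
      (x = 0 → f = 0) := by
    intro x
    by_cases hx : x = 0
    · exact ⟨0, fun h => absurd hx h, fun _ => rfl⟩
    · obtain ⟨f, hf, hu⟩ := hsmooth x hx
      exact ⟨f, fun _ => ⟨hf.1, hf.2, fun g h1 h2 => hu g ⟨h1, h2⟩⟩, fun h => absurd h hx⟩
  choose J hJa hJz using hJex
  have hJn : ∀ x : X, x ≠ 0 → ‖J x‖ = 1 := fun x hx => (hJa x hx).1
  have hJx' : ∀ x : X, x ≠ 0 → J x x = ‖x‖ := fun x hx => (hJa x hx).2.1
  have hJu : ∀ x : X, x ≠ 0 → ∀ g : X →L[ℝ] ℝ, ‖g‖ = 1 → g x = ‖x‖ → g = J x :=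
    fun x hx => (hJa x hx).2.2
  have hJb : ∀ x, ‖J x‖ ≤ 1 := by
    intro x
    by_cases hx : x = 0
    · rw [hJz x hx]
      simp
    · rw [hJn x hx]
  -- continuity of P
  have hPcont : Continuous P := by
    rw [continuous_iff_continuousAt]
    intro z
    unfold ContinuousAt
    apply tendsto_iff_seq_tendsto.2
    intro u hu
    exact P_tendsto K hKc P hPmem hPdist hPuniq hu
  -- convexity
  intro a ha b hb s t hs ht hst
  by_contra hm
  set m := s • a + t • b with hmdef
  obtain ⟨f, hf1, hf2⟩ := cheb_halfspace K P hPmem hPdist hPcont J hJb hJn hJx' hJu m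
    (hdpos m hm)
  have hfa : f a ≤ f (P m) := hf1 a ha
  have hfb : f b ≤ f (P m) := hf1 b hb
  have hfm : f m = s * f a + t * f b := by
    rw [hmdef, map_add, map_smul, map_smul, smul_eq_mul, smul_eq_mul]
  have h1 : f m ≤ f (P m) := by
    calc f m = s * f a + t * f b := hfm
    _ ≤ s * f (P m) + t * f (P m) := by
        apply add_le_add
        · exact mul_le_mul_of_nonneg_left hfa hs
        · exact mul_le_mul_of_nonneg_left hfb ht
    _ = f (P m) := by rw [← add_mul, hst, one_mul]
  have h2 := hdpos m hm
  linarith
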